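/- In the standard α_S-labeling f of a caterpillar constructed by labeling the edges (in the natural left-to-right order) with the elements of S in ascending order and setting f(last pendant vertex) = 0, the labels of the vertices of class A taken in order are strictly decreasing, the labels of the vertices of class B taken in order are strictly increasing, and max_A f < min_B f; hence f is injective. -/

import Mathlib

/-- Vertex type of the caterpillar `C[n_1,m_1,…,n_t,m_t]`. -/
abbrev CatV (t : ℕ) (n m : Fin t → ℕ) : Type :=
  (Fin t ⊕ Fin t) ⊕ ((Σ i : Fin t, Fin (n i)) ⊕ (Σ i : Fin t, Fin (m i)))

/-- The vertices of the bipartition class `A`, in their natural order: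
`x_1, y_1^1,…,y_1^{m_1}, x_2, …, x_t, y_t^1,…,y_t^{m_t}`. -/
def CatAList (t : ℕ) (n m : Fin t → ℕ) : List (CatV t n m) :=
  (List.finRange t).flatMap fun i =>
    Sum.inl (Sum.inl i) ::
      (List.finRange (m i)).map fun j => Sum.inr (Sum.inr ⟨i, j⟩)

/-- The vertices of the bipartition class `B`, in their natural order:
`x_1^1,…,x_1^{n_1}, y_1, x_2^1,…, …, y_t`. -/
def CatBList (t : ℕ) (n m : Fin t → ℕ) : List (CatV t n m) :=
  (List.finRange t).flatMap fun i =>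
    ((List.finRange (n i)).map fun j => (Sum.inr (Sum.inl ⟨i, j⟩) : CatV t n m))
      ++ [Sum.inl (Sum.inr i)]

/-- The edges of the caterpillar in their natural order, each recorded as a
pair (endpoint in `A`, endpoint in `B`):
`[x_1,x_1^1],…,[x_1,x_1^{n_1}],[x_1,y_1],[y_1,y_1^1],…,[y_1,x_2],…,[y_t,y_t^{m_t}]`. -/
def CatEList (t : ℕ) (n m : Fin t → ℕ) : List (CatV t n m × CatV t n m) :=
  (List.finRange t).flatMap fun i =>
    ((List.finRange (n i)).map fun j =>
        ((Sum.inl (Sum.inl i) : CatV t n m), Sum.inr (Sum.inl ⟨i, j⟩)))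
      ++ [(Sum.inl (Sum.inl i), Sum.inl (Sum.inr i))]
      ++ ((List.finRange (m i)).map fun j =>
        ((Sum.inr (Sum.inr ⟨i, j⟩) : CatV t n m), Sum.inl (Sum.inr i)))
      ++ (if h : (i : ℕ) + 1 < t
            then [((Sum.inl (Sum.inl ⟨(i : ℕ) + 1, h⟩) : CatV t n m),
                    Sum.inl (Sum.inr i))]
            else [])

namespace Stmt17
open List

variable {α β : Type*} {R : α → β → Prop}

theorem forall₂_append_split {l₁ l₂ : List α} {s : List β}
    (h : List.Forall₂ R (l₁ ++ l₂) s) :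
    ∃ s₁ s₂, s = s₁ ++ s₂ ∧ List.Forall₂ R l₁ s₁ ∧ List.Forall₂ R l₂ s₂ := by
  induction l₁ generalizing s with
  | nil => exact ⟨[], s, rfl, .nil, h⟩
  | cons a l ih =>
    rw [cons_append, forall₂_cons_left_iff] at h
    obtain ⟨b, s', hab, h', rfl⟩ := h
    obtain ⟨s₁, s₂, rfl, h₁, h₂⟩ := ih h'
    exact ⟨b :: s₁, s₂, rfl, .cons hab h₁, h₂⟩

theorem forall₂_head {l : List α} {s : List β} (h : List.Forall₂ R l s)
    {a} (ha : l.head? = some a) : ∃ b, s.head? = some b ∧ R a b := by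
  cases h with
  | nil => simp at ha
  | cons hab h' =>
    simp only [head?_cons, Option.some.injEq] at ha
    subst ha
    exact ⟨_, rfl, hab⟩

theorem forall₂_getLast {l : List α} {s : List β} (h : List.Forall₂ R l s)
    {a} (ha : l.getLast? = some a) : ∃ b, s.getLast? = some b ∧ R a b := by
  induction h with
  | nil => simp at ha
  | @cons x b l' s' hab h' ih =>
    cases l' with
    | nil =>
      cases h'
      simp only [getLast?_singleton, Option.some.injEq] at ha
      subst ha
      exact ⟨b, rfl, hab⟩
    | cons c l'' =>
      rw [getLast?_cons_cons] at ha
      obtain ⟨w, hw, hw'⟩ := ih ha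
      cases h' with
      | cons h1 h2 =>
        exact ⟨w, by rw [getLast?_cons_cons]; exact hw, hw'⟩

theorem chain_of_forall₂_add {f : α → ℕ} {c : ℕ} {l : List α} {s : List ℕ}
    (h : List.Forall₂ (fun v x => f v = c + x) l s) (hs : List.Chain' (· < ·) s) :
    List.Chain' (fun a b => f a < f b) l := by
  induction h with
  | nil => exact List.IsChain.nil
  | @cons v x l' s' hab h' ih =>
    simp only [List.Chain'] at hs ⊢
    rw [isChain_cons] at hs ⊢
    refine ⟨fun y hy => ?_, ih hs.2⟩
    obtain ⟨x', hx', hyx⟩ := forall₂_head h' hy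
    have h1 : f y = c + x' := hyx
    have := hs.1 x' hx'
    omega

theorem chain_of_forall₂_sub {f : α → ℕ} {d : ℕ} {l : List α} {s : List ℕ}
    (h : List.Forall₂ (fun v x => d = f v + x) l s) (hs : List.Chain' (· < ·) s) :
    List.Chain' (fun a b => f b < f a) l := by
  induction h with
  | nil => exact List.IsChain.nil
  | @cons v x l' s' hab h' ih =>
    simp only [List.Chain'] at hs ⊢
    rw [isChain_cons] at hs ⊢
    refine ⟨fun y hy => ?_, ih hs.2⟩
    obtain ⟨x', hx', hyx⟩ := forall₂_head h' hy
    have h1 : d = f y + x' := hyx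
    have := hs.1 x' hx'
    omega

theorem eq_of_pairwise_ne {f : α → ℕ} {l : List α}
    (h : List.Pairwise (fun a b => f a ≠ f b) l) {v w} (hv : v ∈ l) (hw : w ∈ l)
    (hfvw : f v = f w) : v = w := by
  induction l with
  | nil => simp at hv
  | cons a l ih =>
    rw [pairwise_cons] at h
    rcases mem_cons.1 hv with rfl | hv' <;> rcases mem_cons.1 hw with rfl | hw'
    · rfl
    · exact absurd hfvw (h.1 _ hw')
    · exact absurd hfvw.symm (h.1 _ hv')
    · exact ih h.2 hv' hw'

theorem finRange_drop_succ {t k : ℕ} (hk : k < t) :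
    (List.finRange t).drop k = ⟨k, hk⟩ :: (List.finRange t).drop (k + 1) := by
  rw [List.drop_eq_getElem_cons (by simpa using hk)]
  simp only [List.getElem_finRange]
  rfl

end Stmt17

namespace Stmt17
open List

variable (t : ℕ) (n m : Fin t → ℕ)

def Ablk (i : Fin t) : List (CatV t n m) :=
  Sum.inl (Sum.inl i) :: (List.finRange (m i)).map fun j => Sum.inr (Sum.inr ⟨i, j⟩)

def Bblk (i : Fin t) : List (CatV t n m) :=
  ((List.finRange (n i)).map fun j => (Sum.inr (Sum.inl ⟨i, j⟩) : CatV t n m))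
    ++ [Sum.inl (Sum.inr i)]

def Eblk (i : Fin t) : List (CatV t n m × CatV t n m) :=
  ((List.finRange (n i)).map fun j =>
      ((Sum.inl (Sum.inl i) : CatV t n m), Sum.inr (Sum.inl ⟨i, j⟩)))
    ++ [(Sum.inl (Sum.inl i), Sum.inl (Sum.inr i))]
    ++ ((List.finRange (m i)).map fun j =>
      ((Sum.inr (Sum.inr ⟨i, j⟩) : CatV t n m), Sum.inl (Sum.inr i)))
    ++ (if h : (i : ℕ) + 1 < t
          then [((Sum.inl (Sum.inl ⟨(i : ℕ) + 1, h⟩) : CatV t n m),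
                  Sum.inl (Sum.inr i))]
          else [])

def AL (k : ℕ) : List (CatV t n m) := ((List.finRange t).drop k).flatMap (Ablk t n m)
def BL (k : ℕ) : List (CatV t n m) := ((List.finRange t).drop k).flatMap (Bblk t n m)
def EL (k : ℕ) : List (CatV t n m × CatV t n m) :=
  ((List.finRange t).drop k).flatMap (Eblk t n m)

theorem AL_zero : AL t n m 0 = CatAList t n m := rfl
theorem BL_zero : BL t n m 0 = CatBList t n m := rfl
theorem EL_zero : EL t n m 0 = CatEList t n m := rfl

theorem AL_top : AL t n m t = [] := by
  rw [AL, List.drop_eq_nil_of_le (by simp), flatMap_nil]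
theorem BL_top : BL t n m t = [] := by
  rw [BL, List.drop_eq_nil_of_le (by simp), flatMap_nil]
theorem EL_top : EL t n m t = [] := by
  rw [EL, List.drop_eq_nil_of_le (by simp), flatMap_nil]

theorem AL_cons {k : ℕ} (hk : k < t) :
    AL t n m k = Ablk t n m ⟨k, hk⟩ ++ AL t n m (k + 1) := by
  rw [AL, AL, finRange_drop_succ hk, flatMap_cons]
theorem BL_cons {k : ℕ} (hk : k < t) :
    BL t n m k = Bblk t n m ⟨k, hk⟩ ++ BL t n m (k + 1) := by
  rw [BL, BL, finRange_drop_succ hk, flatMap_cons]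
theorem EL_cons {k : ℕ} (hk : k < t) :
    EL t n m k = Eblk t n m ⟨k, hk⟩ ++ EL t n m (k + 1) := by
  rw [EL, EL, finRange_drop_succ hk, flatMap_cons]

theorem AL_head {k : ℕ} (hk : k < t) :
    (AL t n m k).head? = some (Sum.inl (Sum.inl ⟨k, hk⟩)) := by
  rw [AL_cons t n m hk, Ablk]; rfl

theorem main (f : CatV t n m → ℕ) :
    ∀ d k, t - k = d → k ≤ t → ∀ s : List ℕ, List.Chain' (· < ·) s →
      List.Forall₂ (fun pr x => f pr.2 = f pr.1 + x) (EL t n m k) s →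
      List.Chain' (fun a b => f b < f a) (AL t n m k) ∧
      List.Chain' (fun a b => f a < f b) (BL t n m k) ∧
      (∀ hk : k < t, ∀ b, (BL t n m k).head? = some b →
        ∀ s0, s.head? = some s0 →
          f b = f (Sum.inl (Sum.inl ⟨k, hk⟩) : CatV t n m) + s0) := by
  intro d
  induction d with
  | zero =>
    intro k hd hkt s _ _
    have hkt' : k = t := by omega
    subst hkt'
    exact ⟨by rw [AL_top]; exact List.IsChain.nil, by rw [BL_top]; exact List.IsChain.nil,
      fun hk' => absurd hk' (lt_irrefl _)⟩
  | succ e ih =>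
    intro k hd hkt s hs hf
    have hk : k < t := by omega
    rw [EL_cons t n m hk, Eblk] at hf
    obtain ⟨sblk, srest, rfl, hblk, hrest⟩ := forall₂_append_split hf
    obtain ⟨s3, sN, rfl, h3, hN⟩ := forall₂_append_split hblk
    obtain ⟨s2, sB, rfl, h2, hB⟩ := forall₂_append_split h3
    obtain ⟨sA, sxyl, rfl, hA, hxy⟩ := forall₂_append_split h2
    obtain ⟨sxy, u, hxyR, hu, rfl⟩ := forall₂_cons_left_iff.1 hxy
    obtain rfl : u = [] := forall₂_nil_left_iff.1 hu
    have hxyR' : f (Sum.inl (Sum.inr (⟨k, hk⟩ : Fin t)))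
        = f (Sum.inl (Sum.inl (⟨k, hk⟩ : Fin t))) + sxy := hxyR
    -- chain decompositions of s
    obtain ⟨hsL, hsrest, hbound1⟩ := isChain_append.1 hs
    obtain ⟨hsL2, hsN, hbound2⟩ := isChain_append.1 hsL
    obtain ⟨hsL3, hsB, hbound3⟩ := isChain_append.1 hsL2
    -- converted Forall₂ facts
    have hXB : List.Forall₂
        (fun v x => f v = f (Sum.inl (Sum.inl (⟨k, hk⟩ : Fin t))) + x)
        ((List.finRange (n ⟨k, hk⟩)).map fun j =>
          (Sum.inr (Sum.inl ⟨⟨k, hk⟩, j⟩) : CatV t n m)) sA := by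
      rw [forall₂_map_left_iff] at hA ⊢; exact hA
    have hYA : List.Forall₂
        (fun v x => f (Sum.inl (Sum.inr (⟨k, hk⟩ : Fin t))) = f v + x)
        ((List.finRange (m ⟨k, hk⟩)).map fun j =>
          (Sum.inr (Sum.inr ⟨⟨k, hk⟩, j⟩) : CatV t n m)) sB := by
      rw [forall₂_map_left_iff] at hB ⊢; exact hB
    have FB : List.Forall₂
        (fun v x => f v = f (Sum.inl (Sum.inl (⟨k, hk⟩ : Fin t))) + x)
        (Bblk t n m ⟨k, hk⟩) (sA ++ [sxy]) := by
      rw [Bblk]; exact rel_append hXB (.cons hxyR' .nil)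
    have F23 : List.Forall₂
        (fun v x => f (Sum.inl (Sum.inr (⟨k, hk⟩ : Fin t))) = f v + x)
        (Ablk t n m ⟨k, hk⟩) (sxy :: sB) := by
      rw [Ablk]; exact .cons hxyR' hYA
    have hd_sxy : ∀ y ∈ sB.head?, sxy < y := fun y hy =>
      hbound3 sxy (by rw [List.getLast?_concat]; rfl) y hy
    have hgl : ((sA ++ [sxy]) ++ sB).getLast? = (sxy :: sB).getLast? := by
      rw [append_assoc]
      exact List.getLast?_append_of_ne_nil _ (by simp)
    have hbound2' : ∀ x_ ∈ (sxy :: sB).getLast?, ∀ y ∈ sN.head?, x_ < y :=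
      fun x_ hx_ => hbound2 x_ (by rw [hgl]; exact hx_)
    obtain ⟨hArest, hBrest, hheadrest⟩ :=
      ih (k + 1) (by omega) (by omega) srest hsrest hrest
    -- chains within block k
    have hAblk : List.Chain' (fun a b => f b < f a) (Ablk t n m ⟨k, hk⟩) := by
      simp only [List.Chain']
      rw [Ablk, isChain_cons]
      refine ⟨fun y hy => ?_, chain_of_forall₂_sub hYA hsB⟩
      obtain ⟨sB0, hsB0, hyv⟩ := forall₂_head hYA hy
      have hyv' : f (Sum.inl (Sum.inr (⟨k, hk⟩ : Fin t))) = f y + sB0 := hyv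
      have := hd_sxy sB0 hsB0
      omega
    have hBblk : List.Chain' (fun a b => f a < f b) (Bblk t n m ⟨k, hk⟩) :=
      chain_of_forall₂_add FB hsL3
    refine ⟨?_, ?_, ?_⟩
    · -- A chain
      simp only [List.Chain']
      rw [AL_cons t n m hk, isChain_append]
      refine ⟨hAblk, hArest, ?_⟩
      intro a ha b hb
      by_cases hk1 : k + 1 < t
      · rw [AL_head t n m hk1] at hb
        simp only [Option.mem_def, Option.some.injEq] at hb
        subst hb
        rw [dif_pos (show ((⟨k, hk⟩ : Fin t) : ℕ) + 1 < t from hk1)] at hN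
        obtain ⟨sN0, u', hNR, hu', hsNeq⟩ := forall₂_cons_left_iff.1 hN
        obtain rfl : u' = [] := forall₂_nil_left_iff.1 hu'
        subst hsNeq
        have hNR' : f (Sum.inl (Sum.inr (⟨k, hk⟩ : Fin t)))
            = f (Sum.inl (Sum.inl (⟨k + 1, hk1⟩ : Fin t))) + sN0 := hNR
        obtain ⟨w, hw, haw⟩ := forall₂_getLast F23 ha
        have haw' : f (Sum.inl (Sum.inr (⟨k, hk⟩ : Fin t))) = f a + w := haw
        have hlt := hbound2' w hw sN0 rfl
        omega
      · have hALnil : AL t n m (k + 1) = [] := by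
          rw [show k + 1 = t by omega]; exact AL_top t n m
        rw [hALnil] at hb
        simp at hb
    · -- B chain
      simp only [List.Chain']
      rw [BL_cons t n m hk, isChain_append]
      refine ⟨hBblk, hBrest, ?_⟩
      intro a ha b hb
      by_cases hk1 : k + 1 < t
      · have ha' : a = Sum.inl (Sum.inr (⟨k, hk⟩ : Fin t)) := by
          rw [Bblk, List.getLast?_concat] at ha
          simpa using ha.symm
        subst ha'
        rw [dif_pos (show ((⟨k, hk⟩ : Fin t) : ℕ) + 1 < t from hk1)] at hN
        obtain ⟨sN0, u', hNR, hu', hsNeq⟩ := forall₂_cons_left_iff.1 hN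
        obtain rfl : u' = [] := forall₂_nil_left_iff.1 hu'
        subst hsNeq
        have hNR' : f (Sum.inl (Sum.inr (⟨k, hk⟩ : Fin t)))
            = f (Sum.inl (Sum.inl (⟨k + 1, hk1⟩ : Fin t))) + sN0 := hNR
        have hsrne : srest ≠ [] := by
          intro hnil
          rw [hnil, forall₂_nil_right_iff, EL_cons t n m hk1, Eblk] at hrest
          simp at hrest
        obtain ⟨s0, sr', rfl⟩ : ∃ s0 sr', srest = s0 :: sr' := by
          cases srest with
          | nil => exact absurd rfl hsrne
          | cons a b => exact ⟨a, b, rfl⟩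
        have hfb := hheadrest hk1 b hb s0 rfl
        have hlt : sN0 < s0 := hbound1 sN0 (by rw [List.getLast?_concat]; rfl) s0 rfl
        omega
      · have hBLnil : BL t n m (k + 1) = [] := by
          rw [show k + 1 = t by omega]; exact BL_top t n m
        rw [hBLnil] at hb
        simp at hb
    · -- head fact
      intro hk' b hb s0 hs0
      have hbB : (Bblk t n m ⟨k, hk⟩).head? = some b := by
        rw [BL_cons t n m hk,
          head?_append_of_ne_nil _ (by rw [Bblk]; simp)] at hb
        exact hb
      have hs0' : (sA ++ [sxy]).head? = some s0 := by
        rw [head?_append_of_ne_nil _ (by simp),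
          head?_append_of_ne_nil _ (by simp),
          head?_append_of_ne_nil _ (by simp)] at hs0
        exact hs0
      obtain ⟨s0', hs0'', hbx⟩ := forall₂_head FB hbB
      rw [hs0'] at hs0''
      obtain rfl : s0 = s0' := by simpa using hs0''
      exact hbx

end Stmt17

/-- for the standard `α_S`-labeling `f` of a caterpillar —
the edges, taken in their natural order, get as labels `f(B-end) - f(A-end)`
the elements of `S` in ascending order, and the last vertex of class `A` gets
label `0` — the labels of the vertices of `A`, taken in order, are strictly
decreasing, those of `B` are strictly increasing, every label on `A` is
smaller than every label on `B`, and `f` is injective. -/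
theorem stmt_17 (t : ℕ) (ht : 0 < t) (n m : Fin t → ℕ) (S : Finset ℕ)
    (hpos : ∀ s ∈ S, 0 < s) (f : CatV t n m → ℕ)
    (hf : List.Forall₂ (fun (pr : CatV t n m × CatV t n m) (s : ℕ) =>
        f pr.2 = f pr.1 + s)
      (CatEList t n m) (S.sort (· ≤ ·)))
    (hlast : ∀ v, (CatAList t n m).getLast? = some v → f v = 0) :
    List.Chain' (fun a b => f b < f a) (CatAList t n m) ∧
    List.Chain' (fun a b => f a < f b) (CatBList t n m) ∧
    (∀ a ∈ CatAList t n m, ∀ b ∈ CatBList t n m, f a < f b) ∧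
    Function.Injective f := by
  have schain : List.Chain' (· < ·) (S.sort (· ≤ ·)) := (Finset.sortedLT_sort S).isChain
  obtain ⟨hA, hB, hhead⟩ := Stmt17.main t n m f (t - 0) 0 rfl (Nat.zero_le t) _ schain
    (by rw [Stmt17.EL_zero]; exact hf)
  rw [Stmt17.AL_zero] at hA
  rw [Stmt17.BL_zero] at hB
  obtain ⟨b0, lB, hBeq⟩ : ∃ b0 lB, CatBList t n m = b0 :: lB := by
    have hne : CatBList t n m ≠ [] := by
      rw [← Stmt17.BL_zero, Stmt17.BL_cons t n m ht, Stmt17.Bblk]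
      simp
    cases h : CatBList t n m with
    | nil => exact absurd h hne
    | cons a l => exact ⟨a, l, rfl⟩
  obtain ⟨s0, sr, hseq⟩ : ∃ s0 sr, S.sort (· ≤ ·) = s0 :: sr := by
    have hne : S.sort (· ≤ ·) ≠ [] := by
      intro hnil
      rw [hnil, List.forall₂_nil_right_iff, ← Stmt17.EL_zero,
        Stmt17.EL_cons t n m ht, Stmt17.Eblk] at hf
      simp at hf
    cases h : S.sort (· ≤ ·) with
    | nil => exact absurd h hne
    | cons a l => exact ⟨a, l, rfl⟩
  have hs0pos : 0 < s0 := hpos s0 (by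
    rw [← Finset.mem_sort (α := ℕ) (· ≤ ·), hseq]; simp)
  have hb0 : f b0 = f (Sum.inl (Sum.inl (⟨0, ht⟩ : Fin t))) + s0 := by
    exact hhead ht b0 (by rw [Stmt17.BL_zero, hBeq]; rfl) s0 (by rw [hseq]; rfl)
  have hAeq : CatAList t n m = Sum.inl (Sum.inl (⟨0, ht⟩ : Fin t)) ::
      (((List.finRange (m ⟨0, ht⟩)).map fun j =>
          (Sum.inr (Sum.inr ⟨⟨0, ht⟩, j⟩) : CatV t n m))
        ++ Stmt17.AL t n m 1) := by
    rw [← Stmt17.AL_zero, Stmt17.AL_cons t n m ht, Stmt17.Ablk, List.cons_append]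
  haveI instA : IsTrans (CatV t n m) (fun a b => f b < f a) :=
    ⟨fun _ _ _ h h' => h'.trans h⟩
  haveI instB : IsTrans (CatV t n m) (fun a b => f a < f b) :=
    ⟨fun _ _ _ h h' => h.trans h'⟩
  have pwA := List.isChain_iff_pairwise.1 hA
  have pwB := List.isChain_iff_pairwise.1 hB
  have hAle : ∀ a ∈ CatAList t n m,
      f a ≤ f (Sum.inl (Sum.inl (⟨0, ht⟩ : Fin t))) := by
    intro a haA
    have pwA' := pwA
    rw [hAeq, List.pairwise_cons] at pwA'
    rw [hAeq] at haA
    rcases List.mem_cons.1 haA with rfl | h'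
    · exact le_refl _
    · exact le_of_lt (pwA'.1 a h')
  have hBge : ∀ b ∈ CatBList t n m, f b0 ≤ f b := by
    intro b hbB
    have pwB' := pwB
    rw [hBeq, List.pairwise_cons] at pwB'
    rw [hBeq] at hbB
    rcases List.mem_cons.1 hbB with rfl | h'
    · exact le_refl _
    · exact le_of_lt (pwB'.1 b h')
  have hAB : ∀ a ∈ CatAList t n m, ∀ b ∈ CatBList t n m, f a < f b := by
    intro a haA b hbB
    have h1 := hAle a haA
    have h2 := hBge b hbB
    omega
  have hmem : ∀ u : CatV t n m, u ∈ CatAList t n m ∨ u ∈ CatBList t n m := by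
    intro u
    rcases u with (i | i) | (⟨i, j⟩ | ⟨i, j⟩)
    · exact Or.inl (List.mem_flatMap.2 ⟨i, List.mem_finRange i,
        List.mem_cons_self⟩)
    · exact Or.inr (List.mem_flatMap.2 ⟨i, List.mem_finRange i,
        List.mem_append_right _ (List.mem_singleton_self _)⟩)
    · exact Or.inr (List.mem_flatMap.2 ⟨i, List.mem_finRange i,
        List.mem_append_left _ (List.mem_map.2 ⟨j, List.mem_finRange j, rfl⟩)⟩)
    · exact Or.inl (List.mem_flatMap.2 ⟨i, List.mem_finRange i,
        List.mem_cons.2 (Or.inr (List.mem_map.2 ⟨j, List.mem_finRange j, rfl⟩))⟩)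
  have pwAne : List.Pairwise (fun a b => f a ≠ f b) (CatAList t n m) :=
    pwA.imp fun h => ne_of_gt h
  have pwBne : List.Pairwise (fun a b => f a ≠ f b) (CatBList t n m) :=
    pwB.imp fun h => ne_of_lt h
  refine ⟨hA, hB, hAB, ?_⟩
  intro v w hvw
  rcases hmem v with hv | hv <;> rcases hmem w with hw | hw
  · exact Stmt17.eq_of_pairwise_ne pwAne hv hw hvw
  · exact absurd hvw (ne_of_lt (hAB v hv w hw))
  · exact absurd hvw (ne_of_gt (hAB w hw v hv))
  · exact Stmt17.eq_of_pairwise_ne pwBne hv hw hvw
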